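/- Let R be a normal excellent local ring, π: X → Spec(R) a birational projective morphism with X regular, D an ℝ-divisor and Γ a prime divisor on X such that γ_Γ(D) > 0. Then for every s ∈ ℝ_{≥0}, γ_Γ(D + sΓ) = γ_Γ(D) + s. -/

import Mathlib

universe u

/-- A regular local ring: a Noetherian local ring whose maximal ideal can be generated by
`dim A` elements. -/
def IsRegularLocalRing' (A : Type*) [CommRing A] [IsLocalRing A] : Prop :=
  IsNoetherianRing A ∧ ∃ s : Finset A,
    Ideal.span (s : Set A) = IsLocalRing.maximalIdeal A ∧
    (s.card : WithBot (WithTop ℕ)) = ringKrullDim A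

/-- A regular ring: a Noetherian ring all of whose localizations at primes are regular local
rings. -/
def IsRegularRing' (A : Type*) [CommRing A] : Prop :=
  IsNoetherianRing A ∧
    ∀ p : PrimeSpectrum A, IsRegularLocalRing' (Localization.AtPrime p.asIdeal)

/-- The `A`-algebra `B` is geometrically regular (a regular morphism): it is flat, and for
every prime `q` of `A` and every finite field extension `L` of the residue field `κ(q)`,
the ring `L ⊗_A B` is regular. -/
def Algebra.IsGeometricallyRegular (A B : Type u) [CommRing A] [CommRing B] [Algebra A B] :
    Prop :=
  Module.Flat A B ∧
    ∀ (q : PrimeSpectrum A) (L : Type u) [Field L] [Algebra A L]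
      [Algebra (IsLocalRing.ResidueField (Localization.AtPrime q.asIdeal)) L]
      [IsScalarTower A (IsLocalRing.ResidueField (Localization.AtPrime q.asIdeal)) L],
      FiniteDimensional (IsLocalRing.ResidueField (Localization.AtPrime q.asIdeal)) L →
      IsRegularRing' (TensorProduct A L B)

/-- `R` is a G-ring (Grothendieck ring): for every prime `p`, the formal fibers of `R_p` are
geometrically regular, i.e. the completion map `R_p → (R_p)^` is a regular morphism. -/
def IsGrothendieckRing (R : Type u) [CommRing R] : Prop :=
  ∀ p : PrimeSpectrum R,
    Algebra.IsGeometricallyRegular (Localization.AtPrime p.asIdeal)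
      (AdicCompletion (IsLocalRing.maximalIdeal (Localization.AtPrime p.asIdeal))
        (Localization.AtPrime p.asIdeal))

/-- `R` is J-2: every finitely generated `R`-algebra has open regular locus. -/
def IsJTwo (R : Type u) [CommRing R] : Prop :=
  ∀ (n : ℕ) (I : Ideal (MvPolynomial (Fin n) R)),
    IsOpen {p : PrimeSpectrum (MvPolynomial (Fin n) R ⧸ I) |
      IsRegularLocalRing' (Localization.AtPrime p.asIdeal)}

/-- A catenary ring: any two saturated chains of primes with the same endpoints have the
same length. -/
def IsCatenaryRing (A : Type*) [CommRing A] : Prop :=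
  ∀ c₁ c₂ : LTSeries (PrimeSpectrum A),
    c₁.head = c₂.head → c₁.last = c₂.last →
    (∀ i : Fin c₁.length, c₁.toFun i.castSucc ⋖ c₁.toFun i.succ) →
    (∀ i : Fin c₂.length, c₂.toFun i.castSucc ⋖ c₂.toFun i.succ) →
    c₁.length = c₂.length

/-- `R` is universally catenary: every finitely generated `R`-algebra is catenary. -/
def IsUniversallyCatenary (R : Type u) [CommRing R] : Prop :=
  ∀ (n : ℕ) (I : Ideal (MvPolynomial (Fin n) R)),
    IsCatenaryRing (MvPolynomial (Fin n) R ⧸ I)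

/-- An excellent ring: a Noetherian, universally catenary G-ring satisfying J-2. -/
def IsExcellentRing (R : Type u) [CommRing R] : Prop :=
  IsNoetherianRing R ∧ IsUniversallyCatenary R ∧ IsGrothendieckRing R ∧ IsJTwo R

/-- The data of a birational projective morphism `π : X → Spec R` with `X` regular
(a nonsingular model of the normal excellent local domain `R`), recorded through its divisor
theory: the type of prime divisors `E` on `X` (integral closed subschemes of codimension one)
together with the discrete valuations `ord_E = ν_E` of the function field `K = Frac R` of `X`
given by the one-dimensional regular (hence discrete valuation) local rings `O_{X,E}`. -/
structure RegularBirationalModel (R : Type*) [CommRing R] [IsDomain R] where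
  /-- The prime divisors on `X`. -/
  PrimeDivisor : Type*
  /-- `ord E f = ν_E(f)`, the order of vanishing of the rational function `f ∈ K` along the
  prime divisor `E` (the value at `f = 0` is irrelevant). -/
  ord : PrimeDivisor → FractionRing R → ℤ
  ord_mul : ∀ E (x y : FractionRing R), x ≠ 0 → y ≠ 0 →
    ord E (x * y) = ord E x + ord E y
  ord_add : ∀ E (x y : FractionRing R), x ≠ 0 → y ≠ 0 → x + y ≠ 0 →
    min (ord E x) (ord E y) ≤ ord E (x + y)
  /-- Each `O_{X,E}` is a discrete valuation ring with value group `ℤ`. -/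
  ord_surj : ∀ E (n : ℤ), ∃ x : FractionRing R, x ≠ 0 ∧ ord E x = n
  /-- Distinct prime divisors give distinct valuations. -/
  ord_injective : Function.Injective ord
  /-- A nonzero rational function has finitely many zeros and poles: `(f) = Σ_E ν_E(f) E`
  is a divisor. -/
  finite_support : ∀ x : FractionRing R, x ≠ 0 → {E | ord E x ≠ 0}.Finite
  /-- `π : X → Spec R`: every local ring `O_{X,E}` contains `R`. -/
  ord_nonneg : ∀ E (r : R), r ≠ 0 → 0 ≤ ord E (algebraMap R (FractionRing R) r)
  /-- `π` is proper and birational and `X` is normal: `Γ(X, O_X) = R`, i.e. a rational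
  function with no poles along any prime divisor of `X` belongs to `R`. -/
  globalSections : ∀ x : FractionRing R, x ≠ 0 → (∀ E, 0 ≤ ord E x) →
    ∃ r : R, algebraMap R (FractionRing R) r = x

namespace RegularBirationalModel

variable {R : Type*} [CommRing R] [IsDomain R] (M : RegularBirationalModel R)

/-- An ℝ-divisor `D = Σ aᵢ Eᵢ` on `X`, i.e. a finitely supported real-valued function on the
prime divisors of `X`. -/
def IsDivisor (D : M.PrimeDivisor → ℝ) : Prop := (Function.support D).Finite

/-- An effective divisor: all coefficients nonnegative. -/
def IsEffective (D : M.PrimeDivisor → ℝ) : Prop := ∀ E, 0 ≤ D E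

/-- Linear equivalence of ℝ-divisors: `D₁ ∼ D₂` iff `D₁ − D₂ = (f)` for some `f ∈ K`. -/
def LinEquiv (D₁ D₂ : M.PrimeDivisor → ℝ) : Prop :=
  ∃ x : FractionRing R, x ≠ 0 ∧ ∀ E, D₁ E - D₂ E = (M.ord E x : ℝ)

/-- `τ_Γ(D) = inf {ord_Γ(G) : G ≥ 0, G ∼ D}`. -/
noncomputable def tau (Γ : M.PrimeDivisor) (D : M.PrimeDivisor → ℝ) : ℝ :=
  sInf {t : ℝ | ∃ G : M.PrimeDivisor → ℝ, M.IsEffective G ∧ M.LinEquiv G D ∧ t = G Γ}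

/-- `γ_Γ(D) = inf {τ_Γ(mD)/m : m ∈ ℤ_{>0}}`. -/
noncomputable def gamma (Γ : M.PrimeDivisor) (D : M.PrimeDivisor → ℝ) : ℝ :=
  sInf {t : ℝ | ∃ m : ℕ, 0 < m ∧ t = M.tau Γ (fun E => m * D E) / m}

/-- The divisor `c Γ` supported on the single prime divisor `Γ`. -/
noncomputable def single (Γ : M.PrimeDivisor) (c : ℝ) : M.PrimeDivisor → ℝ :=
  open scoped Classical in fun E => if E = Γ then c else 0

/-- `Γ(X, O_X(⌊D⌋)) = {f ∈ K ∣ (f) + D ≥ 0} ⊆ K` (which only depends on `⌊D⌋` since the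
functions `ord_E` are integer-valued). -/
def sections (D : M.PrimeDivisor → ℝ) : Set (FractionRing R) :=
  {x | x = 0 ∨ ∀ E, 0 ≤ (M.ord E x : ℝ) + D E}

end RegularBirationalModel

section AuxLemmas

private lemma sInf_image_add_const {S : Set ℝ} (hne : S.Nonempty) (hbd : BddBelow S) (c : ℝ) :
    sInf ((fun t => t + c) '' S) = sInf S + c := by
  obtain ⟨l, hl⟩ := hbd
  have hbd' : BddBelow ((fun t => t + c) '' S) := by
    refine ⟨l + c, ?_⟩
    rintro t ⟨a, ha, rfl⟩
    exact (add_le_add_iff_right c).mpr (hl ha)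
  apply le_antisymm
  · rw [← sub_le_iff_le_add]
    refine le_csInf hne fun a ha => ?_
    rw [sub_le_iff_le_add]
    exact csInf_le hbd' ⟨a, ha, rfl⟩
  · refine le_csInf (hne.image _) ?_
    rintro t ⟨a, ha, rfl⟩
    exact (add_le_add_iff_right c).mpr (csInf_le ⟨l, hl⟩ ha)

namespace RegularBirationalModel

variable {R : Type u} [CommRing R] [IsDomain R] (M : RegularBirationalModel R)

lemma ord_one' (E : M.PrimeDivisor) : M.ord E 1 = 0 := by
  have h := M.ord_mul E 1 1 one_ne_zero one_ne_zero
  rw [mul_one] at h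
  omega

lemma ord_pow' (E : M.PrimeDivisor) {x : FractionRing R} (hx : x ≠ 0) (a : ℕ) :
    M.ord E (x ^ a) = a * M.ord E x := by
  induction a with
  | zero => simpa using M.ord_one' E
  | succ n ih =>
    rw [pow_succ, M.ord_mul E _ x (pow_ne_zero n hx) hx, ih]
    push_cast
    ring

lemma single_apply_self (Γ : M.PrimeDivisor) (c : ℝ) : M.single Γ c Γ = c := by
  simp [single]

lemma single_apply_ne (Γ : M.PrimeDivisor) (c : ℝ) (E : M.PrimeDivisor) (h : ¬ E = Γ) :
    M.single Γ c E = 0 := by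
  simp [single, h]

lemma bddBelow_tauSet (Γ : M.PrimeDivisor) (D' : M.PrimeDivisor → ℝ) :
    BddBelow {t : ℝ | ∃ G : M.PrimeDivisor → ℝ, M.IsEffective G ∧ M.LinEquiv G D' ∧ t = G Γ} := by
  refine ⟨0, ?_⟩
  rintro t ⟨G, hG, -, rfl⟩
  exact hG Γ

lemma tau_nonneg (Γ : M.PrimeDivisor) (D' : M.PrimeDivisor → ℝ) : 0 ≤ M.tau Γ D' := by
  rw [tau]
  rcases Set.eq_empty_or_nonempty
      {t : ℝ | ∃ G : M.PrimeDivisor → ℝ, M.IsEffective G ∧ M.LinEquiv G D' ∧ t = G Γ} with h | h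
  · rw [h, Real.sInf_empty]
  · exact le_csInf h (by rintro t ⟨G, hG, -, rfl⟩; exact hG Γ)

lemma tau_le' (Γ : M.PrimeDivisor) (D' G : M.PrimeDivisor → ℝ) (hG : M.IsEffective G)
    (hlin : M.LinEquiv G D') : M.tau Γ D' ≤ G Γ := by
  rw [tau]
  exact csInf_le (M.bddBelow_tauSet Γ D') ⟨G, hG, hlin, rfl⟩

lemma bddBelow_gammaSet (Γ : M.PrimeDivisor) (D' : M.PrimeDivisor → ℝ) :
    BddBelow {t : ℝ | ∃ m : ℕ, 0 < m ∧ t = M.tau Γ (fun E => m * D' E) / m} := by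
  refine ⟨0, ?_⟩
  rintro t ⟨m, hm, rfl⟩
  exact div_nonneg (M.tau_nonneg Γ _) (Nat.cast_nonneg m)

lemma gamma_le' (Γ : M.PrimeDivisor) (D' : M.PrimeDivisor → ℝ) (m : ℕ) (hm : 0 < m) :
    M.gamma Γ D' ≤ M.tau Γ (fun E => m * D' E) / m := by
  rw [gamma]
  exact csInf_le (M.bddBelow_gammaSet Γ D') ⟨m, hm, rfl⟩

lemma coeff_ge (Γ : M.PrimeDivisor) (D : M.PrimeDivisor → ℝ) (m : ℕ) (hm : 0 < m)
    (G : M.PrimeDivisor → ℝ) (hG : M.IsEffective G)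
    (hlin : M.LinEquiv G (fun E => m * D E)) :
    (m : ℝ) * M.gamma Γ D ≤ G Γ := by
  have h1 : M.gamma Γ D ≤ M.tau Γ (fun E => m * D E) / m := M.gamma_le' Γ D m hm
  have h2 : M.tau Γ (fun E => (m : ℝ) * D E) ≤ G Γ := M.tau_le' Γ _ G hG hlin
  have hm' : (0:ℝ) < m := by exact_mod_cast hm
  calc (m:ℝ) * M.gamma Γ D ≤ m * (M.tau Γ (fun E => (m:ℝ) * D E) / m) :=
        mul_le_mul_of_nonneg_left h1 hm'.le
    _ = M.tau Γ (fun E => (m:ℝ) * D E) := by field_simp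
    _ ≤ G Γ := h2

lemma exists_eff (Γ : M.PrimeDivisor) (D : M.PrimeDivisor → ℝ) (hΓ : 0 < M.gamma Γ D)
    (m : ℕ) (hm : 0 < m) :
    ∃ G : M.PrimeDivisor → ℝ, M.IsEffective G ∧ M.LinEquiv G (fun E => m * D E) := by
  by_contra h
  push_neg at h
  have hset : {t : ℝ | ∃ G : M.PrimeDivisor → ℝ, M.IsEffective G ∧
      M.LinEquiv G (fun E => (m:ℝ) * D E) ∧ t = G Γ} = ∅ := by
    ext t
    simp only [Set.mem_setOf_eq, Set.mem_empty_iff_false, iff_false]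
    rintro ⟨G, hG, hl, -⟩
    exact h G hG hl
  have htau : M.tau Γ (fun E => (m:ℝ) * D E) = 0 := by
    rw [tau, hset, Real.sInf_empty]
  have hle := M.gamma_le' Γ D m hm
  rw [htau] at hle
  simp only [zero_div] at hle
  linarith

lemma key_ge (Γ : M.PrimeDivisor) (D : M.PrimeDivisor → ℝ) (hΓ : 0 < M.gamma Γ D)
    (s : ℝ) (m : ℕ) (hm : 0 < m)
    (G : M.PrimeDivisor → ℝ) (hG : M.IsEffective G)
    (hlin : M.LinEquiv G (fun E => m * (D E + M.single Γ s E))) :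
    (m : ℝ) * s ≤ G Γ := by
  by_contra hlt
  push_neg at hlt
  obtain ⟨H, hH, hHlin⟩ := M.exists_eff Γ D hΓ 1 one_pos
  set γ := M.gamma Γ D with hγdef
  clear_value γ
  have hh : γ ≤ H Γ := by
    have hh0 := M.coeff_ge Γ D 1 one_pos H hH hHlin
    rw [← hγdef] at hh0
    push_cast at hh0
    linarith
  obtain ⟨x, hx0, hx⟩ := hlin
  obtain ⟨y, hy0, hy'⟩ := hHlin
  have hy : ∀ E, H E - D E = (M.ord E y : ℝ) := by
    intro E
    have h := hy' E
    push_cast at h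
    linarith
  have hδpos : 0 < (m:ℝ) * s - G Γ := by linarith
  have hγpos : 0 < γ := hΓ
  have hHΓnn : 0 ≤ H Γ := hH Γ
  obtain ⟨b, hb1, hbγ⟩ : ∃ b : ℕ, 1 ≤ b ∧ (m:ℝ) * s - G Γ < b * γ := by
    refine ⟨⌈((m:ℝ) * s - G Γ) / γ⌉₊ + 1, le_add_self, ?_⟩
    have h2 := Nat.le_ceil (((m:ℝ) * s - G Γ) / γ)
    have h1 : ((m:ℝ) * s - G Γ) / γ < ((⌈((m:ℝ) * s - G Γ) / γ⌉₊ + 1 : ℕ) : ℝ) := by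
      push_cast
      linarith
    calc (m:ℝ) * s - G Γ = (((m:ℝ) * s - G Γ) / γ) * γ := by field_simp
      _ < ((⌈((m:ℝ) * s - G Γ) / γ⌉₊ + 1 : ℕ) : ℝ) * γ := mul_lt_mul_of_pos_right h1 hγpos
  obtain ⟨a, haδ, hbh⟩ : ∃ a : ℕ, (a:ℝ) * ((m:ℝ) * s - G Γ) ≤ b * H Γ ∧
      (b:ℝ) * H Γ < ((a:ℝ) + 1) * ((m:ℝ) * s - G Γ) := by
    refine ⟨⌊(b * H Γ) / ((m:ℝ) * s - G Γ)⌋₊, ?_, ?_⟩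
    · have h1 : ((⌊(b * H Γ) / ((m:ℝ) * s - G Γ)⌋₊ : ℕ) : ℝ)
          ≤ (b:ℝ) * H Γ / ((m:ℝ) * s - G Γ) := Nat.floor_le (by positivity)
      calc ((⌊(b * H Γ) / ((m:ℝ) * s - G Γ)⌋₊ : ℕ) : ℝ) * ((m:ℝ) * s - G Γ)
          ≤ ((b:ℝ) * H Γ / ((m:ℝ) * s - G Γ)) * ((m:ℝ) * s - G Γ) :=
            mul_le_mul_of_nonneg_right h1 hδpos.le
        _ = (b:ℝ) * H Γ := by field_simp
    · have h1 : (b:ℝ) * H Γ / ((m:ℝ) * s - G Γ)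
          < ((⌊(b * H Γ) / ((m:ℝ) * s - G Γ)⌋₊ : ℕ) : ℝ) + 1 := Nat.lt_floor_add_one _
      calc (b:ℝ) * H Γ = ((b:ℝ) * H Γ / ((m:ℝ) * s - G Γ)) * ((m:ℝ) * s - G Γ) := by
            field_simp
        _ < (((⌊(b * H Γ) / ((m:ℝ) * s - G Γ)⌋₊ : ℕ) : ℝ) + 1) * ((m:ℝ) * s - G Γ) :=
            mul_lt_mul_of_pos_right h1 hδpos
  have hkpos : 0 < a * m + b := by omega
  have hFeff : M.IsEffective
      (fun E => a * G E + b * H E - M.single Γ ((a:ℝ) * m * s) E) := by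
    intro E
    by_cases hE : E = Γ
    · show 0 ≤ (a:ℝ) * G E + b * H E - M.single Γ ((a:ℝ) * m * s) E
      rw [hE, M.single_apply_self]
      nlinarith [haδ]
    · show 0 ≤ (a:ℝ) * G E + b * H E - M.single Γ ((a:ℝ) * m * s) E
      rw [M.single_apply_ne Γ _ E hE, sub_zero]
      have h1 : 0 ≤ (a:ℝ) * G E := mul_nonneg (Nat.cast_nonneg a) (hG E)
      have h2 : 0 ≤ (b:ℝ) * H E := mul_nonneg (Nat.cast_nonneg b) (hH E)
      linarith
  have hFlin : M.LinEquiv (fun E => a * G E + b * H E - M.single Γ ((a:ℝ) * m * s) E)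
      (fun E => ((a * m + b : ℕ) : ℝ) * D E) := by
    refine ⟨x ^ a * y ^ b, mul_ne_zero (pow_ne_zero a hx0) (pow_ne_zero b hy0), fun E => ?_⟩
    have hord : M.ord E (x ^ a * y ^ b) = a * M.ord E x + b * M.ord E y := by
      rw [M.ord_mul E _ _ (pow_ne_zero a hx0) (pow_ne_zero b hy0),
        M.ord_pow' E hx0, M.ord_pow' E hy0]
    have hordR : (M.ord E (x ^ a * y ^ b) : ℝ)
        = (a:ℝ) * (M.ord E x : ℝ) + (b:ℝ) * (M.ord E y : ℝ) := by
      rw [hord]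
      push_cast
      ring
    have h1 : G E - (m:ℝ) * (D E + M.single Γ s E) = (M.ord E x : ℝ) := hx E
    have h2 : H E - D E = (M.ord E y : ℝ) := hy E
    have hsing : (a:ℝ) * ((m:ℝ) * M.single Γ s E) = M.single Γ ((a:ℝ)*m*s) E := by
      by_cases hE : E = Γ
      · rw [hE, M.single_apply_self, M.single_apply_self]; ring
      · rw [M.single_apply_ne Γ _ E hE, M.single_apply_ne Γ _ E hE]; ring
    have hk' : ((a * m + b : ℕ) : ℝ) * D E = (a:ℝ) * ((m:ℝ) * D E) + (b:ℝ) * D E := by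
      push_cast
      ring
    show (a:ℝ) * G E + b * H E - M.single Γ ((a:ℝ) * m * s) E
        - ((a * m + b : ℕ) : ℝ) * D E = (M.ord E (x ^ a * y ^ b) : ℝ)
    rw [hordR]
    linear_combination (a:ℝ) * h1 + (b:ℝ) * h2 + hsing - hk'
  have hmain := M.coeff_ge Γ D (a * m + b) hkpos _ hFeff hFlin
  rw [← hγdef] at hmain
  have hmain' : ((a * m + b : ℕ) : ℝ) * γ
      ≤ (a:ℝ) * G Γ + b * H Γ - M.single Γ ((a:ℝ) * m * s) Γ := hmain
  rw [M.single_apply_self] at hmain'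
  have hcast : ((a * m + b : ℕ) : ℝ) = (a:ℝ) * m + b := by push_cast; ring
  rw [hcast] at hmain'
  have h6 : (b:ℝ) * γ ≤ ((a:ℝ) * m + b) * γ := by
    have hnn : 0 ≤ (a:ℝ) * m := by positivity
    nlinarith
  nlinarith [hmain', hbh, hbγ, h6]

lemma tau_shift (Γ : M.PrimeDivisor) (D : M.PrimeDivisor → ℝ) (hΓ : 0 < M.gamma Γ D)
    (s : ℝ) (hs : 0 ≤ s) (m : ℕ) (hm : 0 < m) :
    M.tau Γ (fun E => m * (D E + M.single Γ s E)) = M.tau Γ (fun E => m * D E) + m * s := by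
  have hSne : ({t : ℝ | ∃ G : M.PrimeDivisor → ℝ, M.IsEffective G ∧
      M.LinEquiv G (fun E => (m:ℝ) * D E) ∧ t = G Γ}).Nonempty := by
    obtain ⟨G, h1, h2⟩ := M.exists_eff Γ D hΓ m hm
    exact ⟨G Γ, G, h1, h2, rfl⟩
  have hseteq : {t : ℝ | ∃ G : M.PrimeDivisor → ℝ, M.IsEffective G ∧
        M.LinEquiv G (fun E => (m:ℝ) * (D E + M.single Γ s E)) ∧ t = G Γ}
      = (fun t => t + (m:ℝ)*s) '' {t : ℝ | ∃ G : M.PrimeDivisor → ℝ, M.IsEffective G ∧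
        M.LinEquiv G (fun E => (m:ℝ) * D E) ∧ t = G Γ} := by
    ext t
    constructor
    · rintro ⟨G', hG', hlin', rfl⟩
      have hkey := M.key_ge Γ D hΓ s m hm G' hG' hlin'
      refine ⟨G' Γ - (m:ℝ)*s,
        ⟨fun E => G' E - M.single Γ ((m:ℝ)*s) E, ?_, ?_, ?_⟩, by ring⟩
      · intro E
        by_cases hE : E = Γ
        · show 0 ≤ G' E - M.single Γ ((m:ℝ)*s) E
          rw [hE, M.single_apply_self]
          linarith
        · show 0 ≤ G' E - M.single Γ ((m:ℝ)*s) E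
          rw [M.single_apply_ne Γ _ E hE, sub_zero]
          exact hG' E
      · obtain ⟨x, hx0, hx⟩ := hlin'
        refine ⟨x, hx0, fun E => ?_⟩
        have h1 : G' E - (m:ℝ) * (D E + M.single Γ s E) = (M.ord E x : ℝ) := hx E
        have hsing : M.single Γ ((m:ℝ)*s) E = (m:ℝ) * M.single Γ s E := by
          by_cases hE : E = Γ
          · rw [hE, M.single_apply_self, M.single_apply_self]
          · rw [M.single_apply_ne Γ _ E hE, M.single_apply_ne Γ _ E hE, mul_zero]
        show G' E - M.single Γ ((m:ℝ)*s) E - (m:ℝ) * D E = (M.ord E x : ℝ)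
        linear_combination h1 - hsing
      · show G' Γ - (m:ℝ)*s = G' Γ - M.single Γ ((m:ℝ)*s) Γ
        rw [M.single_apply_self]
    · rintro ⟨t₀, ⟨G, hG, hlin, rfl⟩, rfl⟩
      refine ⟨fun E => G E + M.single Γ ((m:ℝ)*s) E, ?_, ?_, ?_⟩
      · intro E
        by_cases hE : E = Γ
        · show 0 ≤ G E + M.single Γ ((m:ℝ)*s) E
          rw [hE, M.single_apply_self]
          have : 0 ≤ (m:ℝ)*s := mul_nonneg (Nat.cast_nonneg m) hs
          linarith [hG Γ]
        · show 0 ≤ G E + M.single Γ ((m:ℝ)*s) E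
          rw [M.single_apply_ne Γ _ E hE, add_zero]
          exact hG E
      · obtain ⟨x, hx0, hx⟩ := hlin
        refine ⟨x, hx0, fun E => ?_⟩
        have h1 : G E - (m:ℝ) * D E = (M.ord E x : ℝ) := hx E
        have hsing : M.single Γ ((m:ℝ)*s) E = (m:ℝ) * M.single Γ s E := by
          by_cases hE : E = Γ
          · rw [hE, M.single_apply_self, M.single_apply_self]
          · rw [M.single_apply_ne Γ _ E hE, M.single_apply_ne Γ _ E hE, mul_zero]
        show G E + M.single Γ ((m:ℝ)*s) E - (m:ℝ) * (D E + M.single Γ s E) = (M.ord E x : ℝ)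
        linear_combination h1 + hsing
      · show G Γ + (m:ℝ)*s = G Γ + M.single Γ ((m:ℝ)*s) Γ
        rw [M.single_apply_self]
  rw [tau, tau, hseteq, sInf_image_add_const hSne (M.bddBelow_tauSet Γ _) _]

end RegularBirationalModel

end AuxLemmas

/-- Lemma B. Let `R` be a normal excellent local ring,
`π : X → Spec R` a birational projective morphism with `X` regular, `D` an ℝ-divisor and
`Γ` a prime divisor on `X` with `γ_Γ(D) > 0`.  Then for every `s ∈ ℝ_{≥0}`,
`γ_Γ(D + sΓ) = γ_Γ(D) + s`. -/
theorem gamma_add_single {R : Type u} [CommRing R] [IsDomain R] [IsIntegrallyClosed R]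
    [IsLocalRing R] (hexc : IsExcellentRing R)
    (M : RegularBirationalModel R) (D : M.PrimeDivisor → ℝ) (hD : M.IsDivisor D)
    (Γ : M.PrimeDivisor) (hΓ : 0 < M.gamma Γ D) (s : ℝ) (hs : 0 ≤ s) :
    M.gamma Γ (fun E => D E + M.single Γ s E) = M.gamma Γ D + s := by
  have hAne : ({t : ℝ | ∃ m : ℕ, 0 < m ∧ t = M.tau Γ (fun E => m * D E) / m}).Nonempty :=
    ⟨M.tau Γ (fun E => ((1:ℕ):ℝ) * D E) / ((1:ℕ):ℝ), 1, one_pos, rfl⟩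
  have hseteq : {t : ℝ | ∃ m : ℕ, 0 < m ∧
        t = M.tau Γ (fun E => (m:ℝ) * (D E + M.single Γ s E)) / m}
      = (fun t => t + s) '' {t : ℝ | ∃ m : ℕ, 0 < m ∧
        t = M.tau Γ (fun E => (m:ℝ) * D E) / m} := by
    ext t
    constructor
    · rintro ⟨m, hm, rfl⟩
      refine ⟨M.tau Γ (fun E => (m:ℝ) * D E) / m, ⟨m, hm, rfl⟩, ?_⟩
      rw [M.tau_shift Γ D hΓ s hs m hm]
      have hm' : (m:ℝ) ≠ 0 := Nat.cast_ne_zero.mpr hm.ne'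
      field_simp
    · rintro ⟨t₀, ⟨m, hm, rfl⟩, rfl⟩
      refine ⟨m, hm, ?_⟩
      rw [M.tau_shift Γ D hΓ s hs m hm]
      have hm' : (m:ℝ) ≠ 0 := Nat.cast_ne_zero.mpr hm.ne'
      field_simp
  simp only [RegularBirationalModel.gamma]
  rw [hseteq, sInf_image_add_const hAne (M.bddBelow_gammaSet Γ D) s]
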